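/- Let k ≥ 1 and let P be a Sylow 2-subgroup of the symmetric group S_{2^k}. Then for every element g of P, the square g^2 lies in the commutator subgroup of P. -/

import Mathlib

open Equiv Subgroup

section Helpers

variable {A : Type*}

private lemma pow_mod_two_inv [Monoid A] {a : A} (ha : a * a = 1) (n : ℕ) :
    a ^ n = a ^ (n % 2) := by
  have h2 : a ^ 2 = 1 := by rw [pow_two, ha]
  conv_lhs => rw [← Nat.div_add_mod n 2, pow_add, pow_mul, h2, one_pow, one_mul]

/-- The homomorphism from `C2` sending the generator to a given involution. -/
def invHom [Group A] (a : A) (ha : a * a = 1) : Multiplicative (ZMod 2) →* A where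
  toFun x := a ^ (Multiplicative.toAdd x).val
  map_one' := by
    show a ^ (ZMod.val (0 : ZMod 2)) = 1
    simp
  map_mul' x y := by
    show a ^ (ZMod.val (Multiplicative.toAdd x + Multiplicative.toAdd y)) = _
    rw [ZMod.val_add, ← pow_mod_two_inv ha, pow_add]

@[simp] lemma invHom_ofAdd_one [Group A] (a : A) (ha : a * a = 1) :
    invHom a ha (Multiplicative.ofAdd (1 : ZMod 2)) = a := by
  show a ^ (Multiplicative.toAdd (Multiplicative.ofAdd (1 : ZMod 2))).val = a
  rw [show (Multiplicative.toAdd (Multiplicative.ofAdd (1 : ZMod 2))).val = 1 from by decide]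
  exact pow_one a

lemma two_cases (x : Multiplicative (ZMod 2)) :
    x = 1 ∨ x = Multiplicative.ofAdd 1 := by
  revert x; decide

/-- If a group is generated by involutions, every square is in the commutator subgroup. -/
lemma sq_mem_commutator_of_closure_inv {G : Type*} [Group G]
    (h : closure {x : G | x * x = 1} = ⊤) (g : G) : g ^ 2 ∈ commutator G := by
  have key : ∀ x : G, ((powMonoidHom 2 : Abelianization G →* _).comp Abelianization.of) x = 1 := by
    have : closure {x : G | x * x = 1} ≤
        MonoidHom.ker ((powMonoidHom 2 : Abelianization G →* _).comp Abelianization.of) := by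
      rw [closure_le]
      intro x hx
      have hx' : x * x = 1 := hx
      simp only [SetLike.mem_coe, MonoidHom.mem_ker, MonoidHom.comp_apply, powMonoidHom_apply,
        pow_two, ← map_mul, hx', map_one]
    rw [h] at this
    intro x
    exact MonoidHom.mem_ker.mp (this (mem_top x))
  have : Abelianization.of (g ^ 2) = 1 := by
    have := key g
    simpa [pow_two] using this
  exact (QuotientGroup.eq_one_iff _).mp this

/-- Pushing "generated by involutions" through a homomorphism. -/
lemma map_mem_closure_inv {G H : Type*} [Group G] [Group H] (j : G →* H)
    (hG : closure {x : G | x * x = 1} = ⊤) (g : G) :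
    j g ∈ closure {x : H | x * x = 1} := by
  have h1 : j g ∈ (closure {x : G | x * x = 1}).map j := by
    rw [hG]; exact ⟨g, mem_top g, rfl⟩
  rw [MonoidHom.map_closure] at h1
  refine closure_mono ?_ h1
  rintro _ ⟨y, hy, rfl⟩
  show j y * j y = 1
  rw [← map_mul, hy, map_one]

lemma closure_inv_of_mulEquiv {G H : Type*} [Group G] [Group H] (e : G ≃* H)
    (hG : closure {x : G | x * x = 1} = ⊤) :
    closure {x : H | x * x = 1} = ⊤ := by
  rw [eq_top_iff]
  intro x _
  have := map_mem_closure_inv e.toMonoidHom hG (e.symm x)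
  simpa using this

/-- Bundled `permCongr` as a `MulEquiv`. -/
def permCongrMulEquiv {α β : Type*} (e : α ≃ β) : Perm α ≃* Perm β :=
  { e.permCongr with
    map_mul' := fun σ τ => by
      ext x
      simp [Equiv.permCongr_apply, Perm.mul_apply] }

end Helpers

/-- Bundle carrying the iterated wreath product data. -/
structure WBundle (n : ℕ) where
  T : Type
  [grp : Group T]
  [ft : Fintype T]
  f : T →* Equiv.Perm (Fin (2 ^ n))
  inj : Function.Injective f
  card : Fintype.card T = 2 ^ (2 ^ n - 1)
  gen : closure {x : T | x * x = 1} = ⊤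

attribute [instance] WBundle.grp WBundle.ft

/-- Base bundle at `n = 1`. -/
def baseBundle : WBundle 1 where
  T := Multiplicative (ZMod 2)
  f := invHom (Equiv.swap (⟨0, by norm_num⟩ : Fin (2 ^ 1)) ⟨1, by norm_num⟩)
    (Equiv.swap_mul_self _ _)
  inj := by
    rw [injective_iff_map_eq_one]
    intro x hx
    rcases two_cases x with rfl | rfl
    · rfl
    · rw [invHom_ofAdd_one] at hx
      have := Equiv.swap_eq_one_iff.mp hx
      simp [Fin.ext_iff] at this
  card := by decide
  gen := by
    rw [eq_top_iff]
    intro x hx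
    clear hx
    exact subset_closure (show x * x = 1 by revert x; decide)

section Step

variable {n : ℕ} (Wb : WBundle n)

/-- The swapping automorphism. -/
def swapAut : MulAut (Wb.T × Wb.T) := (MulEquiv.prodComm : Wb.T × Wb.T ≃* Wb.T × Wb.T)

lemma swapAut_sq : swapAut Wb * swapAut Wb = 1 :=
  MulEquiv.ext fun x => by simp [MulAut.mul_apply, swapAut]

/-- The action homomorphism `C2 → Aut (T × T)`. -/
def actHom : Multiplicative (ZMod 2) →* MulAut (Wb.T × Wb.T) :=
  invHom (swapAut Wb) (swapAut_sq Wb)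

/-- The next wreath product. -/
def WT := (Wb.T × Wb.T) ⋊[actHom Wb] Multiplicative (ZMod 2)

instance : Group (WT Wb) := SemidirectProduct.instGroup

/-- Equivalence with the underlying product type. -/
def wtEquiv : WT Wb ≃ (Wb.T × Wb.T) × Multiplicative (ZMod 2) where
  toFun x := (x.left, x.right)
  invFun p := ⟨p.1, p.2⟩
  left_inv x := rfl
  right_inv p := rfl

noncomputable instance : Fintype (WT Wb) := Fintype.ofEquiv _ (wtEquiv Wb).symm

end Step

section Step2

variable {n : ℕ} (Wb : WBundle n)

/-- The hom on the normal part. -/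
def fN : Wb.T × Wb.T →* Perm (Fin (2 ^ n) ⊕ Fin (2 ^ n)) :=
  (Equiv.Perm.sumCongrHom _ _).comp (Wb.f.prodMap Wb.f)

lemma sumComm_sq : (Equiv.sumComm (Fin (2 ^ n)) (Fin (2 ^ n)) : Perm _) *
    (Equiv.sumComm (Fin (2 ^ n)) (Fin (2 ^ n)) : Perm _) = 1 := by
  ext x
  cases x <;> rfl

/-- The hom on the `C2` part. -/
def fH : Multiplicative (ZMod 2) →* Perm (Fin (2 ^ n) ⊕ Fin (2 ^ n)) :=
  invHom (Equiv.sumComm (Fin (2 ^ n)) (Fin (2 ^ n)) : Perm _) sumComm_sq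

lemma compat : ∀ g, (fN Wb).comp ((actHom Wb) g).toMonoidHom =
    (MulAut.conj ((fH (n := n)) g)).toMonoidHom.comp (fN Wb) := by
  intro g
  rcases two_cases g with rfl | rfl
  · refine MonoidHom.ext fun nb => Equiv.ext fun x => ?_
    simp
  · refine MonoidHom.ext fun nb => Equiv.ext fun x => ?_
    obtain ⟨a, b⟩ := nb
    cases x <;>
      simp [fN, fH, actHom, swapAut, Equiv.Perm.sumCongrHom, MulAut.conj_apply,
        Equiv.Perm.mul_apply, Equiv.Perm.inv_def, Equiv.sumComm_symm]

/-- The hom from the semidirect product to permutations of the sum. -/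
def fsum : WT Wb →* Perm (Fin (2 ^ n) ⊕ Fin (2 ^ n)) :=
  SemidirectProduct.lift (fN Wb) (fH (n := n)) (compat Wb)

lemma fsum_inj : Function.Injective (fsum Wb) := by
  rw [injective_iff_map_eq_one]
  rintro ⟨⟨a, b⟩, h⟩ hx
  have hx' : (fN Wb) (a, b) * (fH (n := n)) h = 1 := hx
  rcases two_cases h with rfl | rfl
  · rw [map_one, mul_one] at hx'
    have h2 : (Wb.f.prodMap Wb.f) (a, b) = 1 :=
      Equiv.Perm.sumCongrHom_injective (by simpa [fN] using hx')
    have ha : Wb.f a = 1 := congrArg Prod.fst h2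
    have hb : Wb.f b = 1 := congrArg Prod.snd h2
    have ha' : a = 1 := Wb.inj (by rw [ha, map_one])
    have hb' : b = 1 := Wb.inj (by rw [hb, map_one])
    subst ha' hb'
    rfl
  · exfalso
    have hz : (0 : ℕ) < 2 ^ n := Nat.pow_pos (by norm_num)
    have hfh : (fH (n := n)) (Multiplicative.ofAdd 1) = Equiv.sumComm _ _ :=
      invHom_ofAdd_one _ _
    have := Equiv.ext_iff.mp hx' (Sum.inl ⟨0, hz⟩)
    rw [hfh] at this
    simp only [Equiv.Perm.mul_apply, Equiv.sumComm_apply, Sum.swap_inl, Equiv.Perm.one_apply] at this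
    simp [fN, Equiv.Perm.sumCongrHom] at this

/-- Reindexing equivalence. -/
def sumToFin (n : ℕ) : (Fin (2 ^ n) ⊕ Fin (2 ^ n)) ≃ Fin (2 ^ (n + 1)) :=
  finSumFinEquiv.trans (finCongr (by rw [pow_succ]; omega))

/-- The step construction of the bundle. -/
noncomputable def stepBundle : WBundle (n + 1) where
  T := WT Wb
  f := (permCongrMulEquiv (sumToFin n)).toMonoidHom.comp (fsum Wb)
  inj := (permCongrMulEquiv (sumToFin n)).injective.comp (fsum_inj Wb)
  card := by
    rw [Fintype.card_congr (wtEquiv Wb)]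
    rw [Fintype.card_prod, Fintype.card_prod, Wb.card]
    rw [show Fintype.card (Multiplicative (ZMod 2)) = 2 from by decide]
    have h1 : 1 ≤ 2 ^ n := Nat.one_le_two_pow
    have h2 : (2 ^ n - 1) + (2 ^ n - 1) + 1 = 2 ^ (n + 1) - 1 := by
      rw [pow_succ]; omega
    rw [← pow_add, ← pow_succ, h2]
  gen := by
    rw [eq_top_iff]
    rintro ⟨⟨a, b⟩, h⟩ hmem
    clear hmem
    rw [show (⟨(a, b), h⟩ : WT Wb) =
      SemidirectProduct.inl (a, b) * SemidirectProduct.inr h from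
      (SemidirectProduct.inl_left_mul_inr_right _).symm]
    refine mul_mem ?_ (subset_closure ?_)
    · rw [show ((a, b) : Wb.T × Wb.T) = (a, 1) * (1, b) from by simp, map_mul]
      refine mul_mem ?_ ?_
      · exact map_mem_closure_inv
          ((SemidirectProduct.inl).comp (MonoidHom.inl Wb.T Wb.T)) Wb.gen a
      · exact map_mem_closure_inv
          ((SemidirectProduct.inl).comp (MonoidHom.inr Wb.T Wb.T)) Wb.gen b
    · show SemidirectProduct.inr h * SemidirectProduct.inr h = 1
      exact (map_mul (SemidirectProduct.inr (φ := actHom Wb)) h h).symm.trans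
        (by rw [show h * h = 1 from by revert h; decide]; exact map_one _)

end Step2

/-- The recursively defined bundle. -/
noncomputable def wbundle : (m : ℕ) → WBundle (m + 1)
  | 0 => baseBundle
  | (m + 1) => stepBundle (wbundle m)

lemma sum_pow_div (k : ℕ) : ∑ i ∈ Finset.Ico 1 (k + 1), 2 ^ k / 2 ^ i = 2 ^ k - 1 := by
  induction k with
  | zero => simp
  | succ k ih =>
    rw [Finset.sum_Ico_succ_top (by omega)]
    rw [Finset.sum_congr rfl (fun i hi => by
      obtain ⟨h1i, h2i⟩ := Finset.mem_Ico.mp hi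
      rw [pow_succ, mul_comm (2 ^ k) 2, Nat.mul_div_assoc 2 (pow_dvd_pow 2 (by omega))])]
    rw [← Finset.mul_sum, ih, Nat.div_self (by positivity)]
    have := Nat.one_le_two_pow (n := k)
    rw [pow_succ]; omega

lemma perm_factorization (m : ℕ) :
    (Nat.card (Perm (Fin (2 ^ (m + 1))))).factorization 2 = 2 ^ (m + 1) - 1 := by
  haveI := Fact.mk Nat.prime_two
  rw [Nat.card_eq_fintype_card, Fintype.card_perm, Fintype.card_fin,
    Nat.factorization_def _ Nat.prime_two,
    padicValNat_factorial (b := m + 2) (by rw [Nat.log_pow (by norm_num)]; omega)]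
  exact sum_pow_div (m + 1)

/-- For `k ≥ 1` and `P` a Sylow 2-subgroup of the symmetric group `S_{2^k}`,
the square of every element of `P` lies in the commutator subgroup of `P`. -/
theorem stmt_6 (k : ℕ) (hk : 1 ≤ k)
    (P : Sylow 2 (Equiv.Perm (Fin (2 ^ k)))) (g : ↥P) :
    g ^ 2 ∈ commutator ↥P := by
  haveI := Fact.mk Nat.prime_two
  obtain ⟨m, rfl⟩ : ∃ m, k = m + 1 := ⟨k - 1, by omega⟩
  let Wb := wbundle m
  let E : Subgroup (Perm (Fin (2 ^ (m + 1)))) := Wb.f.range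
  have hcard : Nat.card E = 2 ^ ((Nat.card (Perm (Fin (2 ^ (m + 1))))).factorization 2) := by
    rw [perm_factorization m,
      Nat.card_congr (MonoidHom.ofInjective Wb.inj).toEquiv.symm,
      Nat.card_eq_fintype_card, Wb.card]
  let E' : Sylow 2 (Perm (Fin (2 ^ (m + 1)))) := Sylow.ofCard E hcard
  let e : Wb.T ≃* ↥P := (MonoidHom.ofInjective Wb.inj).trans (Sylow.equiv E' P)
  exact sq_mem_commutator_of_closure_inv (closure_inv_of_mulEquiv e Wb.gen) g
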